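/- Minimum energy to deliver a fixed data amount within a time budget (generalizing equation (20)): For every Φ > 0 and L > 0, the infimum of (P(r) + ρ)·l over all r > 0 and 0 < l ≤ L with r·l = Φ equals Φ·ξ(max{r_ee, Φ/L}), and it is attained at r = max{r_ee, Φ/L} and l = Φ/r. In particular, if Φ ≤ r_ee·L the minimum energy is Φ·(P(r_ee) + ρ)/r_ee = Φ·min_{r>0} (P(r) + ρ)/r. -/

import Mathlib

open Real Finset

/-- Transmit-power function `P(r) = (e^r - 1)/g` for channel power gain `g`. -/
noncomputable def P (g r : ℝ) : ℝ := (Real.exp r - 1) / g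

/-- Energy-efficiency (energy-per-bit) ratio `ξ(r) = (P(r) + ρ)/r`. -/
noncomputable def xi (g ρ r : ℝ) : ℝ := (P g r + ρ) / r

lemma xi_hasDerivAt (g ρ : ℝ) (hg : 0 < g) {x : ℝ} (hx : 0 < x) :
    HasDerivAt (xi g ρ) ((x * Real.exp x - (Real.exp x - 1 + g * ρ)) / (g * x ^ 2)) x := by
  have hu : HasDerivAt (fun r => (Real.exp r - 1) / g + ρ) (Real.exp x / g) x := by
    simpa using (((Real.hasDerivAt_exp x).sub_const 1).div_const g).add_const ρ
  have hv : HasDerivAt (fun r : ℝ => r) 1 x := hasDerivAt_id x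
  have h := hu.div hv hx.ne'
  have heq : (Real.exp x / g * x - ((Real.exp x - 1) / g + ρ) * 1) / x ^ 2
      = (x * Real.exp x - (Real.exp x - 1 + g * ρ)) / (g * x ^ 2) := by
    field_simp
  rw [heq] at h
  exact h

lemma xi_deriv1_hasDerivAt (g ρ : ℝ) (hg : 0 < g) {x : ℝ} (hx : 0 < x) :
    HasDerivAt (fun x => (x * Real.exp x - (Real.exp x - 1 + g * ρ)) / (g * x ^ 2))
      ((Real.exp x * (x ^ 2 - 2 * x + 2) - 2 + 2 * g * ρ) / (g * x ^ 3)) x := by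
  have hN : HasDerivAt (fun r => r * Real.exp r - (Real.exp r - 1 + g * ρ))
      (x * Real.exp x) x := by
    have h0 := ((hasDerivAt_id x).mul (Real.hasDerivAt_exp x)).sub
      (((Real.hasDerivAt_exp x).sub_const 1).add_const (g * ρ))
    simp only [id_eq] at h0
    refine HasDerivAt.congr_deriv h0 ?_
    ring
  have hD : HasDerivAt (fun r : ℝ => g * r ^ 2) (g * (2 * x)) x := by
    simpa using ((hasDerivAt_pow 2 x).const_mul g)
  have hden : g * x ^ 2 ≠ 0 := by positivity
  have h := hN.div hD hden
  refine HasDerivAt.congr_deriv h ?_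
  field_simp
  ring

lemma xi_convex (g ρ : ℝ) (hg : 0 < g) (hρ : 0 < ρ) :
    ConvexOn ℝ (Set.Ioi 0) (xi g ρ) := by
  have hint : interior (Set.Ioi (0:ℝ)) = Set.Ioi 0 := interior_Ioi
  refine convexOn_of_hasDerivWithinAt2_nonneg (convex_Ioi 0)
    (f' := fun x => (x * Real.exp x - (Real.exp x - 1 + g * ρ)) / (g * x ^ 2))
    (f'' := fun x => (Real.exp x * (x ^ 2 - 2 * x + 2) - 2 + 2 * g * ρ) / (g * x ^ 3))
    ?_ ?_ ?_ ?_
  · exact fun x hx => (xi_hasDerivAt g ρ hg hx).continuousAt.continuousWithinAt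
  · intro x hx
    rw [hint] at hx ⊢
    exact (xi_hasDerivAt g ρ hg hx).hasDerivWithinAt
  · intro x hx
    rw [hint] at hx ⊢
    exact (xi_deriv1_hasDerivAt g ρ hg hx).hasDerivWithinAt
  · intro x hx
    rw [hint] at hx
    have hx : (0:ℝ) < x := hx
    have h1 : 1 + x + x ^ 2 / 2 ≤ Real.exp x := Real.quadratic_le_exp_of_nonneg hx.le
    have hnum : 0 ≤ Real.exp x * (x ^ 2 - 2 * x + 2) - 2 + 2 * g * ρ := by
      have hq : (0:ℝ) ≤ x ^ 2 - 2 * x + 2 := by nlinarith [sq_nonneg (x - 1)]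
      have key := mul_le_mul_of_nonneg_right h1 hq
      nlinarith [key, mul_pos hg hρ, sq_nonneg (x - 1), sq_nonneg x,
        mul_nonneg (sq_nonneg x) (sq_nonneg (x - 1))]
    positivity

lemma xi_mono (g ρ ree : ℝ) (hg : 0 < g) (hρ : 0 < ρ) (hree_pos : 0 < ree)
    (hree_min : ∀ r : ℝ, 0 < r → r ≠ ree → xi g ρ ree < xi g ρ r)
    {a b : ℝ} (ha : ree ≤ a) (hab : a ≤ b) : xi g ρ a ≤ xi g ρ b := by
  have ha0 : (0:ℝ) < a := lt_of_lt_of_le hree_pos ha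
  have hb0 : (0:ℝ) < b := lt_of_lt_of_le ha0 hab
  rcases ha.eq_or_lt with h | h
  · subst h
    rcases eq_or_ne b ree with h | h
    · rw [h]
    · exact (hree_min b hb0 h).le
  · have hxa : xi g ρ ree ≤ xi g ρ a := (hree_min a ha0 (by linarith)).le
    exact (xi_convex g ρ hg hρ).le_right_of_left_le'' (Set.mem_Ioi.2 hree_pos)
      (Set.mem_Ioi.2 hb0) h hab hxa

/-- **Minimum energy to deliver a fixed data amount within a time budget**
(generalizing equation (20)). For `Φ > 0` and `L > 0`, the infimum of `(P(r) + ρ) l`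
over all `r > 0`, `0 < l ≤ L` with `r l = Φ` equals `Φ · ξ(max(r_ee, Φ/L))`, attained at
`r = max(r_ee, Φ/L)`, `l = Φ/r`. In particular if `Φ ≤ r_ee L` the minimum energy is
`Φ (P(r_ee) + ρ)/r_ee`, which is `Φ` times the minimal energy-per-bit. -/
theorem min_energy_fixed_data
    (g ρ ree : ℝ) (hg : 0 < g) (hρ : 0 < ρ)
    (hree_pos : 0 < ree)
    (hree_min : ∀ r : ℝ, 0 < r → r ≠ ree → xi g ρ ree < xi g ρ r)
    (Φ L : ℝ) (hΦ : 0 < Φ) (hL : 0 < L) :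
    0 < Φ / max ree (Φ / L) ∧
    Φ / max ree (Φ / L) ≤ L ∧
    max ree (Φ / L) * (Φ / max ree (Φ / L)) = Φ ∧
    (P g (max ree (Φ / L)) + ρ) * (Φ / max ree (Φ / L)) = Φ * xi g ρ (max ree (Φ / L)) ∧
    (∀ r l : ℝ, 0 < r → 0 < l → l ≤ L → r * l = Φ →
      Φ * xi g ρ (max ree (Φ / L)) ≤ (P g r + ρ) * l) ∧
    (Φ ≤ ree * L →
      (P g (max ree (Φ / L)) + ρ) * (Φ / max ree (Φ / L)) = Φ * ((P g ree + ρ) / ree) ∧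
      (∀ r : ℝ, 0 < r → (P g ree + ρ) / ree ≤ (P g r + ρ) / r)) := by
  set m := max ree (Φ / L) with hm_def
  have hm0 : 0 < m := lt_of_lt_of_le hree_pos (le_max_left _ _)
  have hΦLm : Φ / L ≤ m := le_max_right _ _
  refine ⟨div_pos hΦ hm0, ?_, ?_, ?_, ?_, ?_⟩
  · rw [div_le_iff₀ hm0]
    rw [div_le_iff₀ hL] at hΦLm
    linarith
  · field_simp
  · rw [xi]
    field_simp
  · intro r l hr hl hlL hrl
    have hlv : l = Φ / r := by
      rw [eq_div_iff hr.ne']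
      linarith [hrl, mul_comm r l]
    have he : (P g r + ρ) * l = Φ * xi g ρ r := by
      rw [hlv, xi]
      field_simp
    rw [he]
    have hximr : xi g ρ m ≤ xi g ρ r := by
      have hrΦL : Φ / L ≤ r := by
        rw [div_le_iff₀ hL]
        nlinarith
      rcases le_total (Φ / L) ree with hc | hc
      · have hmr : m = ree := max_eq_left hc
        rw [hmr]
        rcases eq_or_ne r ree with h | h
        · rw [h]
        · exact (hree_min r hr h).le
      · have hmr : m = Φ / L := max_eq_right hc
        exact xi_mono g ρ ree hg hρ hree_pos hree_min (hmr ▸ hc) (hmr ▸ hrΦL)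
    exact mul_le_mul_of_nonneg_left hximr hΦ.le
  · intro h
    have hmr : m = ree := max_eq_left (by rw [div_le_iff₀ hL]; linarith)
    rw [hmr]
    constructor
    · field_simp
    · intro r hr
      rcases eq_or_ne r ree with h | h
      · rw [h]
      · simpa [xi] using (hree_min r hr h).le
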